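/- arXiv:1901.01212 — 2 statements merged into one kernel-verified Lean document; each statement's English description precedes it below -/
import Mathlib

section
/- Let M be an m × n matrix with entries in Z₂ (n, m ≥ 1) such that every column of M contains at least one 1. Then there exists a vector v in the row space of M (i.e., a Z₂-linear combination of the rows of M) such that strictly more than n/2 of the entries of v are equal to 1. -/
lemma aux_half (m n : ℕ) (M : Fin m → Fin n → ZMod 2) (j : Fin n)
    (i₀ : Fin m) (h : M i₀ j = 1) :
    (Finset.univ.filter (fun c : Fin m → ZMod 2 => (∑ i, c i * M i j) = 1)).card * 2
      = 2 ^ m := by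
  have key : ∀ c : Fin m → ZMod 2,
      (∑ i, Function.update c i₀ (c i₀ + 1) i * M i j) = (∑ i, c i * M i j) + 1 := by
    intro c
    have step : ∀ i, Function.update c i₀ (c i₀ + 1) i * M i j
        = c i * M i j + if i = i₀ then M i₀ j else 0 := by
      intro i
      by_cases hi : i = i₀
      · subst hi; simp [Function.update_self, add_mul]
      · simp [Function.update_of_ne hi, hi]
    rw [Finset.sum_congr rfl (fun i _ => step i), Finset.sum_add_distrib]
    simp [h]
  have inv : ∀ c : Fin m → ZMod 2,
      Function.update (Function.update c i₀ (c i₀ + 1)) i₀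
        (Function.update c i₀ (c i₀ + 1) i₀ + 1) = c := by
    intro c
    funext i
    by_cases hi : i = i₀
    · subst hi
      simp only [Function.update_self]
      have : ∀ x : ZMod 2, x + 1 + 1 = x := by decide
      exact this _
    · simp [Function.update_of_ne hi]
  have flip : ∀ x : ZMod 2, (x + 1 = 1) ↔ ¬ (x = 1) := by decide
  have hbij : (Finset.univ.filter (fun c : Fin m → ZMod 2 => (∑ i, c i * M i j) = 1)).card
      = (Finset.univ.filter (fun c : Fin m → ZMod 2 => ¬ (∑ i, c i * M i j) = 1)).card := by
    apply Finset.card_nbij' (fun c => Function.update c i₀ (c i₀ + 1))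
      (fun c => Function.update c i₀ (c i₀ + 1))
    · intro c hc
      simp only [Finset.coe_filter, Set.mem_setOf_eq, Finset.mem_univ, true_and] at hc ⊢
      rw [key c, flip, not_not]
      exact hc
    · intro c hc
      simp only [Finset.coe_filter, Set.mem_setOf_eq, Finset.mem_univ, true_and] at hc ⊢
      rw [key c, flip]
      exact hc
    · intro c _; exact inv c
    · intro c _; exact inv c
  have hsplit := Finset.card_filter_add_card_filter_not
    (s := (Finset.univ : Finset (Fin m → ZMod 2)))
    (fun c => (∑ i, c i * M i j) = 1)
  have hcard : (Finset.univ : Finset (Fin m → ZMod 2)).card = 2 ^ m := by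
    simp [Finset.card_univ]
  rw [hcard] at hsplit
  rw [mul_two]
  nth_rewrite 2 [hbij]
  exact hsplit

theorem stmt_0 (m n : ℕ) (hm : 1 ≤ m) (hn : 1 ≤ n)
    (M : Fin m → Fin n → ZMod 2)
    (hcol : ∀ j : Fin n, ∃ i : Fin m, M i j = 1) :
    ∃ c : Fin m → ZMod 2,
      2 * (Finset.univ.filter (fun j : Fin n => (∑ i, c i * M i j) = 1)).card > n := by
  by_contra hcon
  push_neg at hcon
  set f : (Fin m → ZMod 2) → ℕ :=
    fun c => (Finset.univ.filter (fun j : Fin n => (∑ i, c i * M i j) = 1)).card * 2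
    with hf
  have hswap : ∑ c : Fin m → ZMod 2, f c = n * 2 ^ m := by
    calc ∑ c : Fin m → ZMod 2, f c
        = ∑ c : Fin m → ZMod 2, ∑ j : Fin n,
            (if (∑ i, c i * M i j) = 1 then 1 else 0) * 2 := by
          simp_rw [hf, Finset.card_filter, Finset.sum_mul]
      _ = ∑ j : Fin n, ∑ c : Fin m → ZMod 2,
            (if (∑ i, c i * M i j) = 1 then 1 else 0) * 2 := Finset.sum_comm
      _ = ∑ _j : Fin n, 2 ^ m := by
          apply Finset.sum_congr rfl
          intro j _
          obtain ⟨i₀, hi₀⟩ := hcol j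
          rw [← aux_half m n M j i₀ hi₀, Finset.card_filter, Finset.sum_mul]
      _ = n * 2 ^ m := by simp [Finset.sum_const, Finset.card_univ]
  have hzero : f 0 = 0 := by
    simp [hf]
  have hsum0 : ∑ c : Fin m → ZMod 2, f c
      = ∑ c ∈ (Finset.univ : Finset (Fin m → ZMod 2)).erase 0, f c := by
    rw [← Finset.add_sum_erase Finset.univ f (Finset.mem_univ 0), hzero, zero_add]
  have hub : ∑ c ∈ (Finset.univ : Finset (Fin m → ZMod 2)).erase 0, f c
      ≤ (2 ^ m - 1) * n := by
    calc ∑ c ∈ (Finset.univ : Finset (Fin m → ZMod 2)).erase 0, f c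
        ≤ ∑ _c ∈ (Finset.univ : Finset (Fin m → ZMod 2)).erase 0, n := by
          apply Finset.sum_le_sum
          intro c _
          have := hcon c
          simp only [hf]
          omega
      _ = (2 ^ m - 1) * n := by
          rw [Finset.sum_const, smul_eq_mul,
            Finset.card_erase_of_mem (Finset.mem_univ _)]
          simp [Finset.card_univ]
  rw [← hsum0, hswap] at hub
  obtain ⟨k, hk⟩ : ∃ k, 2 ^ m = k + 1 :=
    ⟨2 ^ m - 1, (Nat.succ_pred_eq_of_pos (Nat.pow_pos (n := m) (by norm_num))).symm⟩
  rw [hk] at hub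
  simp only [Nat.add_sub_cancel] at hub
  nlinarith
end

section
/- Let n ∈ ℕ with n ≥ 1, and let M be an n × n matrix over Z₂ with M_{ii} = 1 for all i. Then there exists a nonempty set of rows of M whose Z₂-sum has strictly more than n/2 entries equal to 1. -/
theorem stmt_6 (n : ℕ) (hn : 1 ≤ n) (M : Fin n → Fin n → ZMod 2)
    (hdiag : ∀ i, M i i = 1) :
    ∃ T : Finset (Fin n), T.Nonempty ∧
      2 * (Finset.univ.filter (fun j : Fin n => (∑ i ∈ T, M i j) = 1)).card > n := by
  by_contra hcon
  push_neg at hcon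
  set f : Finset (Fin n) → ℕ :=
    fun T => (Finset.univ.filter (fun j : Fin n => (∑ i ∈ T, M i j) = 1)).card with hf
  have hz : ∀ x : ZMod 2, ¬ x = 1 ↔ x = 0 := by decide
  -- for each column j, exactly half the subsets give sum 1
  have key : ∀ j : Fin n,
      (Finset.univ.filter (fun T : Finset (Fin n) => (∑ i ∈ T, M i j) = 1)).card = 2 ^ (n - 1) := by
    intro j
    have flip : ∀ T : Finset (Fin n),
        (∑ i ∈ (if j ∈ T then T.erase j else insert j T), M i j) = (∑ i ∈ T, M i j) + 1 := by
      intro T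
      by_cases hjT : j ∈ T
      · simp only [hjT, if_true]
        have h1 := Finset.add_sum_erase T (fun i => M i j) hjT
        simp only [hdiag j] at h1
        have h2 : (1 : ZMod 2) + 1 = 0 := by decide
        calc (∑ i ∈ T.erase j, M i j)
            = (1 + ∑ i ∈ T.erase j, M i j) + 1 := by rw [add_comm 1, add_assoc, h2, add_zero]
          _ = (∑ i ∈ T, M i j) + 1 := by rw [h1]
      · simp only [hjT, if_false]
        rw [Finset.sum_insert hjT, hdiag j]; ring
    have hbij : (Finset.univ.filter (fun T : Finset (Fin n) => (∑ i ∈ T, M i j) = 1)).card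
        = (Finset.univ.filter (fun T : Finset (Fin n) => (∑ i ∈ T, M i j) = 0)).card := by
      refine Finset.card_nbij' (fun T => if j ∈ T then T.erase j else insert j T)
        (fun T => if j ∈ T then T.erase j else insert j T) ?_ ?_ ?_ ?_
      · intro T hT
        simp only [Finset.mem_coe, Finset.mem_filter] at hT ⊢
        refine ⟨Finset.mem_univ _, ?_⟩
        rw [flip T, hT.2]; decide
      · intro T hT
        simp only [Finset.mem_coe, Finset.mem_filter] at hT ⊢
        refine ⟨Finset.mem_univ _, ?_⟩
        rw [flip T, hT.2]; decide
      · intro T _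
        by_cases hjT : j ∈ T
        · simp [hjT, Finset.insert_erase hjT]
        · simp [hjT, Finset.erase_insert hjT]
      · intro T _
        by_cases hjT : j ∈ T
        · simp [hjT, Finset.insert_erase hjT]
        · simp [hjT, Finset.erase_insert hjT]
    have hsplit : (Finset.univ.filter (fun T : Finset (Fin n) => (∑ i ∈ T, M i j) = 1)).card
        + (Finset.univ.filter (fun T : Finset (Fin n) => (∑ i ∈ T, M i j) = 0)).card
        = 2 ^ n := by
      have h1 := Finset.card_filter_add_card_filter_not
        (s := (Finset.univ : Finset (Finset (Fin n))))
        (p := fun T => (∑ i ∈ T, M i j) = 1)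
      have h2 : (Finset.univ.filter (fun T : Finset (Fin n) => ¬ (∑ i ∈ T, M i j) = 1))
          = Finset.univ.filter (fun T : Finset (Fin n) => (∑ i ∈ T, M i j) = 0) := by
        apply Finset.filter_congr
        intro T _
        simp [hz]
      rw [h2] at h1
      rw [h1]
      simp [Finset.card_univ]
    rw [← hbij] at hsplit
    have h3 : 2 * (Finset.univ.filter (fun T : Finset (Fin n) => (∑ i ∈ T, M i j) = 1)).card
        = 2 * 2 ^ (n - 1) := by
      rw [two_mul, hsplit, ← pow_succ', Nat.sub_add_cancel hn]
    omega
  -- total sum over all subsets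
  have total : ∑ T : Finset (Fin n), f T = n * 2 ^ (n - 1) := by
    have h4 : ∑ T : Finset (Fin n), f T
        = ∑ j : Fin n, (Finset.univ.filter
            (fun T : Finset (Fin n) => (∑ i ∈ T, M i j) = 1)).card := by
      simp only [hf, Finset.card_filter]
      rw [Finset.sum_comm]
    rw [h4]
    simp [key, Finset.card_univ, mul_comm]
  -- every subset has 2 * f T ≤ n
  have hle : ∀ T : Finset (Fin n), 2 * f T ≤ n := by
    intro T
    rcases T.eq_empty_or_nonempty with rfl | hT
    · have : f ∅ = 0 := by
        simp [hf, Finset.filter_eq_empty_iff]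
      omega
    · exact hcon T hT
  have hstrict : ∑ T : Finset (Fin n), 2 * f T < ∑ _T : Finset (Fin n), n := by
    apply Finset.sum_lt_sum (fun T _ => hle T)
    refine ⟨∅, Finset.mem_univ _, ?_⟩
    have : f ∅ = 0 := by simp [hf, Finset.filter_eq_empty_iff]
    omega
  rw [← Finset.mul_sum, total, Finset.sum_const, Finset.card_univ, Fintype.card_finset,
    Fintype.card_fin, smul_eq_mul] at hstrict
  have : 2 * (n * 2 ^ (n - 1)) = 2 ^ n * n := by
    rw [← mul_assoc, mul_comm 2 n, mul_assoc, ← pow_succ', Nat.sub_add_cancel hn, mul_comm]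
  omega
end
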